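/- Let G be a graph containing an induced 4-cycle with vertices a1, b1, a2, b2 and edges a1b1, b1a2, a2b2, b2a1. If G is banner-free and house-free, and z is a vertex adjacent to b1 but not to b2, where b1 and b2 are both adjacent to a1 and a2 and b1b2 is not an edge, then z is adjacent to both a1 and a2. -/

import Mathlib

open SimpleGraph

/-- The banner: a 4-cycle 0-1-2-3-0 with a pendant vertex 4 adjacent to 0. -/
def banner : SimpleGraph (Fin 5) :=
  SimpleGraph.fromRel (fun i j => (i, j) ∈ [((0 : Fin 5), 1), (1, 2), (2, 3), (3, 0), (0, 4)])

/-- The house: a 4-cycle 0-1-2-3-0 with a vertex 4 adjacent to 2 and 3. -/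
def house : SimpleGraph (Fin 5) :=
  SimpleGraph.fromRel (fun i j => (i, j) ∈ [((0 : Fin 5), 1), (1, 2), (2, 3), (3, 0), (2, 4), (3, 4)])

/-- The chordless 4-cycle. -/
def cycle4 : SimpleGraph (Fin 4) :=
  SimpleGraph.fromRel (fun i j => j = i + 1)

/-- The chordless 5-cycle. -/
def cycle5 : SimpleGraph (Fin 5) :=
  SimpleGraph.fromRel (fun i j => j = i + 1)

/-- The complete bipartite graph K_{2,3}. -/
def k23 : SimpleGraph (Fin 2 ⊕ Fin 3) := completeBipartiteGraph (Fin 2) (Fin 3)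

/-- `G` contains no induced copy of `F` (an embedding preserves both adjacency
and non-adjacency). -/
def Free {W : Type*} {V : Type*} (F : SimpleGraph W) (G : SimpleGraph V) : Prop :=
  IsEmpty (F ↪g G)

/-- `v 0, ..., v 4` form an induced (chordless) 5-cycle of `G`, edges `v i - v (i+1)`. -/
def IsInducedC5 {V : Type*} (G : SimpleGraph V) (v : Fin 5 → V) : Prop :=
  Function.Injective v ∧ ∀ i j, G.Adj (v i) (v j) ↔ (j = i + 1 ∨ i = j + 1)

/-- `v 0, ..., v 4` form an induced house in `G`: 4-cycle `v 0, v 1, v 2, v 3`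
(standing for v1,v2,v3,v4) plus `v 4` (standing for v5) adjacent to `v 1` and `v 2`. -/
def IsInducedHouse {V : Type*} (G : SimpleGraph V) (v : Fin 5 → V) : Prop :=
  Function.Injective v ∧ ∀ i j, G.Adj (v i) (v j) ↔
    ((i, j) ∈ [((0 : Fin 5), 1), (1, 2), (2, 3), (3, 0), (1, 4), (2, 4)] ∨
     (j, i) ∈ [((0 : Fin 5), 1), (1, 2), (2, 3), (3, 0), (1, 4), (2, 4)])

/-- `Q` is disjoint from and anticomplete to the five vertices `v 0, ..., v 4`. -/
def Anticomplete5 {V : Type*} (G : SimpleGraph V) (Q : Set V) (v : Fin 5 → V) : Prop :=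
  (∀ i, v i ∉ Q) ∧ ∀ q ∈ Q, ∀ i, ¬ G.Adj q (v i)
theorem stmt_16 {V : Type*} (G : SimpleGraph V)
    (hban : _root_.Free banner G) (hhouse : _root_.Free house G)
    (a1 a2 b1 b2 z : V)
    (ha : a1 ≠ a2) (hb : b1 ≠ b2)
    (e1 : G.Adj a1 b1) (e2 : G.Adj b1 a2) (e3 : G.Adj a2 b2) (e4 : G.Adj b2 a1)
    (na : ¬ G.Adj a1 a2) (nb : ¬ G.Adj b1 b2)
    (hz1 : G.Adj z b1) (hz2 : ¬ G.Adj z b2) :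
    G.Adj z a1 ∧ G.Adj z a2 := by
  have hz_b1 : z ≠ b1 := hz1.ne
  have hz_b2 : z ≠ b2 := fun h => nb (h ▸ hz1).symm
  have na' : ¬ G.Adj a2 a1 := fun h => na h.symm
  have nb' : ¬ G.Adj b2 b1 := fun h => nb h.symm
  have hz2' : ¬ G.Adj b2 z := fun h => hz2 h.symm
  have hz_a1 : z ≠ a1 := fun h => hz2 (h ▸ e4.symm)
  have hz_a2 : z ≠ a2 := fun h => hz2 (h ▸ e3)
  have mk : ∀ (f : Fin 5 → V), Function.Injective f →
      (∀ i j, G.Adj (f i) (f j) ↔ banner.Adj i j) → (banner ↪g G) :=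
    fun f hinj hiff => ⟨⟨f, hinj⟩, fun {i j} => hiff i j⟩
  have mkh : ∀ (f : Fin 5 → V), Function.Injective f →
      (∀ i j, G.Adj (f i) (f j) ↔ house.Adj i j) → (house ↪g G) :=
    fun f hinj hiff => ⟨⟨f, hinj⟩, fun {i j} => hiff i j⟩
  by_cases h1 : G.Adj z a1
  · by_cases h2 : G.Adj z a2
    · exact ⟨h1, h2⟩
    · -- house: 0↦a2, 1↦b2, 2↦a1, 3↦b1, 4↦z
      have h2' : ¬ G.Adj a2 z := fun h => h2 h.symm
      exfalso
      apply hhouse.false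
      apply mkh ![a2, b2, a1, b1, z]
      · intro i j hij
        fin_cases i <;> fin_cases j <;> simp_all [Ne.symm]
      · intro i j
        fin_cases i <;> fin_cases j <;>
          simp [banner, house, e1, e2, e3, e4, e1.symm, e2.symm, e3.symm, e4.symm,
            na, nb, na', nb', hz1, hz2, hz2', hz1.symm, h1, h1.symm, h2, h2',
            G.irrefl, SimpleGraph.fromRel_adj]
  · by_cases h2 : G.Adj z a2
    · -- house: 0↦a1, 1↦b2, 2↦a2, 3↦b1, 4↦z
      have h1' : ¬ G.Adj a1 z := fun h => h1 h.symm
      exfalso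
      apply hhouse.false
      apply mkh ![a1, b2, a2, b1, z]
      · intro i j hij
        fin_cases i <;> fin_cases j <;> simp_all [Ne.symm]
      · intro i j
        fin_cases i <;> fin_cases j <;>
          simp [banner, house, e1, e2, e3, e4, e1.symm, e2.symm, e3.symm, e4.symm,
            na, nb, na', nb', hz1, hz2, hz2', hz1.symm, h1, h1', h2, h2.symm,
            G.irrefl, SimpleGraph.fromRel_adj]
    · -- banner: 0↦b1, 1↦a1, 2↦b2, 3↦a2, 4↦z
      have h1' : ¬ G.Adj a1 z := fun h => h1 h.symm
      have h2' : ¬ G.Adj a2 z := fun h => h2 h.symm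
      exfalso
      apply hban.false
      apply mk ![b1, a1, b2, a2, z]
      · intro i j hij
        fin_cases i <;> fin_cases j <;> simp_all [Ne.symm]
      · intro i j
        fin_cases i <;> fin_cases j <;>
          simp [banner, e1, e2, e3, e4, e1.symm, e2.symm, e3.symm, e4.symm,
            na, nb, na', nb', hz1, hz2, hz2', hz1.symm, h1, h1', h2, h2',
            G.irrefl, SimpleGraph.fromRel_adj]
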